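/- Let {Δ_t} be a nonincreasing sequence of positive reals and suppose there exist C₂ > 0 and p > 1 such that Δ_t^p ≤ C₂(Δ_{t-1} - Δ_t) for all sufficiently large t. Then there exists C₃ > 0 such that Δ_t ≤ C₃·t^{-1/(p-1)} for all sufficiently large t. -/
import Mathlib


theorem stmt16 (Δ : ℕ → ℝ) (hpos : ∀ t, 0 < Δ t) (hmono : ∀ t, Δ (t+1) ≤ Δ t)
    (C₂ p : ℝ) (hC : 0 < C₂) (hp : 1 < p)
    (hrec : ∃ T, ∀ t ≥ T, Δ (t+1) ^ p ≤ C₂ * (Δ t - Δ (t+1))) :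
    ∃ C₃ > (0 : ℝ), ∃ T', ∀ t ≥ T', Δ t ≤ C₃ * (t : ℝ) ^ (-(1 / (p - 1))) := by
  obtain ⟨T, hT⟩ := hrec
  set α := p - 1 with hα
  have hα0 : 0 < α := by simp only [hα]; linarith
  -- antitone
  have hanti : ∀ s t : ℕ, s ≤ t → Δ t ≤ Δ s :=
    fun s t h => antitone_nat_of_succ_le hmono h
  -- key elementary inequality
  have key : ∀ u : ℝ, 0 < u → u ≤ 1 → min α 1 * (1 - u) ≤ 1 - u ^ α := by
    intro u hu hu1
    rcases le_total α 1 with h1 | h1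
    · have hb := rpow_one_add_le_one_add_mul_self (s := u - 1) (by linarith) hα0.le h1
      rw [show (1 : ℝ) + (u - 1) = u by ring] at hb
      rw [min_eq_left h1]
      linarith
    · rw [min_eq_right h1]
      have h2 : u ^ α ≤ u ^ (1 : ℝ) := Real.rpow_le_rpow_of_exponent_ge hu hu1 h1
      rw [Real.rpow_one] at h2
      linarith
  set m := min α 1 with hm
  have hm0 : 0 < m := lt_min hα0 one_pos
  have h2α : (1 : ℝ) < 2 ^ α :=
    (Real.one_lt_rpow_iff_of_pos (by norm_num)).mpr (Or.inl ⟨one_lt_two, hα0⟩)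
  set c := min (m / (2 * C₂)) ((2 ^ α - 1) * Δ T ^ (-α)) with hc
  have hc0 : 0 < c := by
    apply lt_min
    · positivity
    · have := Real.rpow_pos_of_pos (hpos T) (-α)
      nlinarith
  -- one step
  have step : ∀ t, T ≤ t → Δ t ^ (-α) + c ≤ Δ (t+1) ^ (-α) := by
    intro t ht
    have hx : 0 < Δ (t+1) := hpos _
    have hy : 0 < Δ t := hpos _
    have hxy : Δ (t+1) ≤ Δ t := hmono t
    have hrec' := hT t ht
    have hxa : 0 < Δ (t+1) ^ (-α) := Real.rpow_pos_of_pos hx _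
    have hya : 0 < Δ t ^ (-α) := Real.rpow_pos_of_pos hy _
    rcases le_or_gt (Δ t / 2) (Δ (t+1)) with hcase | hcase
    · -- case 1
      have hu : 0 < Δ (t+1) / Δ t := div_pos hx hy
      have hu1 : Δ (t+1) / Δ t ≤ 1 := (div_le_one hy).2 hxy
      have hk := key _ hu hu1
      have hk2 : Δ (t+1) ^ (-α) * (m * (1 - Δ (t+1) / Δ t)) ≤
          Δ (t+1) ^ (-α) * (1 - (Δ (t+1) / Δ t) ^ α) :=
        mul_le_mul_of_nonneg_left hk hxa.le
      have h1 : Δ (t+1) ^ α ≠ 0 := (Real.rpow_pos_of_pos hx α).ne'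
      have h2 : Δ t ^ α ≠ 0 := (Real.rpow_pos_of_pos hy α).ne'
      have e1 : Δ (t+1) ^ (-α) * ((Δ (t+1) / Δ t) ^ α) = Δ t ^ (-α) := by
        rw [Real.div_rpow hx.le hy.le, Real.rpow_neg hx.le, Real.rpow_neg hy.le]
        field_simp
      have hk3 : Δ (t+1) ^ (-α) * (m * (1 - Δ (t+1) / Δ t)) ≤
          Δ (t+1) ^ (-α) - Δ t ^ (-α) := by
        calc Δ (t+1) ^ (-α) * (m * (1 - Δ (t+1) / Δ t))
            ≤ Δ (t+1) ^ (-α) * (1 - (Δ (t+1) / Δ t) ^ α) := hk2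
          _ = Δ (t+1) ^ (-α) - Δ t ^ (-α) := by rw [mul_sub, mul_one, e1]
      have e2 : Δ (t+1) ^ (-α) * Δ (t+1) ^ p = Δ (t+1) := by
        rw [← Real.rpow_add hx, show -α + p = 1 by rw [hα]; ring, Real.rpow_one]
      have hfrac : 1 / (2 * C₂) ≤ Δ (t+1) ^ (-α) * (1 - Δ (t+1) / Δ t) := by
        have h5 : 1 - Δ (t+1) / Δ t = (Δ t - Δ (t+1)) / Δ t := by field_simp
        rw [h5]
        have hrec2 : Δ (t+1) ^ p / C₂ ≤ Δ t - Δ (t+1) := by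
          rw [div_le_iff₀ hC]; linarith
        have h6 : Δ (t+1) ^ (-α) * ((Δ (t+1) ^ p / C₂) / Δ t) ≤
            Δ (t+1) ^ (-α) * ((Δ t - Δ (t+1)) / Δ t) := by gcongr
        refine le_trans ?_ h6
        have h7 : Δ (t+1) ^ (-α) * ((Δ (t+1) ^ p / C₂) / Δ t) =
            Δ (t+1) / (C₂ * Δ t) := by
          rw [div_div, ← mul_div_assoc, e2]
        rw [h7, div_le_div_iff₀ (by positivity) (by positivity)]
        nlinarith
      have hc1 : c ≤ Δ (t+1) ^ (-α) * (m * (1 - Δ (t+1) / Δ t)) := by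
        calc c ≤ m / (2 * C₂) := min_le_left _ _
          _ = m * (1 / (2 * C₂)) := by ring
          _ ≤ m * (Δ (t+1) ^ (-α) * (1 - Δ (t+1) / Δ t)) :=
            mul_le_mul_of_nonneg_left hfrac hm0.le
          _ = Δ (t+1) ^ (-α) * (m * (1 - Δ (t+1) / Δ t)) := by ring
      linarith
    · -- case 2
      have h8 : Δ t ^ (-α) * 2 ^ α ≤ Δ (t+1) ^ (-α) := by
        have h81 : (Δ t / 2) ^ (-α) ≤ Δ (t+1) ^ (-α) :=
          Real.rpow_le_rpow_of_nonpos hx hcase.le (neg_nonpos.2 hα0.le)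
        have h82 : (Δ t / 2) ^ (-α) = Δ t ^ (-α) * 2 ^ α := by
          rw [Real.div_rpow hy.le (by norm_num), Real.rpow_neg hy.le,
            Real.rpow_neg (by norm_num : (0:ℝ) ≤ 2)]
          have : (2 : ℝ) ^ α ≠ 0 := by positivity
          field_simp
        linarith [h81, h82.symm.le, h82.le]
      have hΔtT : Δ t ≤ Δ T := hanti T t ht
      have h9 : Δ T ^ (-α) ≤ Δ t ^ (-α) :=
        Real.rpow_le_rpow_of_nonpos hy hΔtT (neg_nonpos.2 hα0.le)
      have hc2 : c ≤ (2 ^ α - 1) * Δ T ^ (-α) := min_le_right _ _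
      nlinarith [Real.rpow_pos_of_pos (hpos T) (-α)]
  -- iterate
  have main : ∀ n : ℕ, (n : ℝ) * c ≤ Δ (T + n) ^ (-α) := by
    intro n
    induction n with
    | zero => simpa using (Real.rpow_pos_of_pos (hpos T) (-α)).le
    | succ n ih =>
      have hs := step (T + n) (Nat.le_add_right T n)
      rw [show T + (n + 1) = T + n + 1 from rfl]
      push_cast
      linarith
  refine ⟨(c / 2) ^ (-(1 / α)), Real.rpow_pos_of_pos (by positivity) _, 2 * T + 2, ?_⟩
  intro t ht
  have htT : T ≤ t := by omega
  have ht0 : (0 : ℝ) < t := by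
    have : (1 : ℕ) ≤ t := by omega
    exact_mod_cast Nat.lt_of_lt_of_le Nat.zero_lt_one this
  have hcast : ((t - T : ℕ) : ℝ) = (t : ℝ) - T := by
    rw [Nat.cast_sub htT]
  have h10 : ((t : ℝ) - T) * c ≤ Δ t ^ (-α) := by
    have := main (t - T)
    rw [Nat.add_sub_cancel' htT, hcast] at this
    exact this
  have h11 : (t : ℝ) / 2 ≤ (t : ℝ) - T := by
    have : (2 * T + 2 : ℕ) ≤ t := ht
    have h2 : (2 * (T : ℝ) + 2) ≤ t := by exact_mod_cast this
    linarith
  have h12 : c * ((t : ℝ) / 2) ≤ Δ t ^ (-α) := by nlinarith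
  have h13 : (0 : ℝ) < c * ((t : ℝ) / 2) := by positivity
  have h14 : (Δ t ^ (-α)) ^ (-(1 / α)) ≤ (c * ((t : ℝ) / 2)) ^ (-(1 / α)) :=
    Real.rpow_le_rpow_of_nonpos h13 h12 (neg_nonpos.2 (by positivity))
  have hαne : α ≠ 0 := hα0.ne'
  have h15 : (Δ t ^ (-α)) ^ (-(1 / α)) = Δ t := by
    rw [← Real.rpow_mul (hpos t).le, show (-α) * (-(1 / α)) = 1 by field_simp,
      Real.rpow_one]
  have h16 : (c * ((t : ℝ) / 2)) ^ (-(1 / α)) =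
      (c / 2) ^ (-(1 / α)) * (t : ℝ) ^ (-(1 / α)) := by
    rw [show c * ((t : ℝ) / 2) = (c / 2) * t by ring,
      Real.mul_rpow (by positivity) (by positivity)]
  rw [h15, h16] at h14
  exact h14
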